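/- Let F : ℝ → ℝ be of class C¹ with F' < 0 everywhere, F(0) = 0, F(p) → +∞ as p → −∞ and F(p) → −∞ as p → +∞; let G be admissible for F, let E be a C¹ solution of E' = 1/G(−2F(E)) with E(0) = 0, let f : ℝ → ℝ be the C¹ function with f'(t) = −F(E(t)) and f(0)=0, and let g : ℝ → ℝ be a C¹ function with g(0) = 0, g'(0) = 0, g'(x) ≥ max(2x, ψ₁(x)) for x ≥ 0 and g'(x) ≤ min(2x, ψ₂(x)) for x ≤ 0, where ψ(t,x) = −F⁻¹(xE'(t) − F(E(t))) − E(t), ψ₁(x) = sup_{t∈ℝ} ψ(t,x), ψ₂(x) = inf_{t∈ℝ} ψ(t,x). Then the function φ(t,x) = f(t) + g(x) + xE(t) satisfies φ(0,0) = 0 and φ(t,x) > 0 for every (t,x) ≠ (0,0). -/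

import Mathlib

open Set Filter Topology

/-- `F⁻¹`, the inverse of the decreasing bijection `F`. -/
noncomputable def Finv (F : ℝ → ℝ) : ℝ → ℝ := Function.invFun F

/-- `G` is admissible for `F`: it is continuous, even, dominates
`max((−F⁻¹)', (−2F)⁻¹) > 0`, non-increasing on `(-∞,0]` and non-decreasing on `[0,∞)`. -/
def Admissible (F G : ℝ → ℝ) : Prop :=
  Continuous G ∧
  (∀ x : ℝ, 0 < max (deriv (fun y => -(Finv F y)) x)
      (Function.invFun (fun p => -2 * F p) x)) ∧
  (∀ x : ℝ, max (deriv (fun y => -(Finv F y)) x)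
      (Function.invFun (fun p => -2 * F p) x) ≤ G x) ∧
  (∀ t : ℝ, G (-t) = G t) ∧
  AntitoneOn G (Iic 0) ∧ MonotoneOn G (Ici 0)

/-- `ψ(t,x) = −F⁻¹(x E'(t) − F(E(t))) − E(t)`. -/
noncomputable def psi (F E : ℝ → ℝ) (t x : ℝ) : ℝ :=
  -(Finv F (x * deriv E t - F (E t))) - E t

/-- `ψ₁(x) = sup_t ψ(t,x)` (in the extended reals). -/
noncomputable def psi1 (F E : ℝ → ℝ) (x : ℝ) : EReal :=
  ⨆ t : ℝ, (psi F E t x : EReal)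

/-- `ψ₂(x) = inf_t ψ(t,x)` (in the extended reals). -/
noncomputable def psi2 (F E : ℝ → ℝ) (x : ℝ) : EReal :=
  ⨅ t : ℝ, (psi F E t x : EReal)

theorem stmt17 (F G E f g : ℝ → ℝ) (hF : ContDiff ℝ 1 F) (hF' : ∀ p, deriv F p < 0)
    (hF0 : F 0 = 0) (hFbot : Tendsto F atBot atTop) (hFtop : Tendsto F atTop atBot)
    (hG : Admissible F G)
    (hE : ContDiff ℝ 1 E) (hE0 : E 0 = 0)
    (hE' : ∀ t : ℝ, deriv E t = 1 / G (-2 * F (E t)))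
    (hf : ContDiff ℝ 1 f) (hf0 : f 0 = 0) (hf' : ∀ t : ℝ, deriv f t = -F (E t))
    (hg : ContDiff ℝ 1 g) (hg0 : g 0 = 0) (hg'0 : deriv g 0 = 0)
    (hg1 : ∀ x : ℝ, 0 ≤ x →
      max ((2 * x : ℝ) : EReal) (psi1 F E x) ≤ ((deriv g x : ℝ) : EReal))
    (hg2 : ∀ x : ℝ, x ≤ 0 →
      ((deriv g x : ℝ) : EReal) ≤ min ((2 * x : ℝ) : EReal) (psi2 F E x)) :
    f 0 + g 0 + 0 * E 0 = 0 ∧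
    (∀ t x : ℝ, (t, x) ≠ ((0 : ℝ), (0 : ℝ)) → 0 < f t + g x + x * E t) := by
  obtain ⟨hGc, hGpos', hGmax, hGeven, hGanti, hGmono⟩ := hG
  have hGpos : ∀ x, 0 < G x := fun x => lt_of_lt_of_le (hGpos' x) (hGmax x)
  have hFdiff : Differentiable ℝ F := hF.differentiable one_ne_zero
  have hFanti : StrictAnti F := strictAnti_of_deriv_neg hF'
  have hFinj : Function.Injective F := hFanti.injective
  have hFsurj : Function.Surjective F := by
    intro y
    obtain ⟨a, ha⟩ := (hFbot.eventually (eventually_ge_atTop y)).exists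
    obtain ⟨b, hb⟩ := (hFtop.eventually (eventually_le_atBot y)).exists
    exact intermediate_value_univ b a hFdiff.continuous ⟨hb, ha⟩
  have hFr : ∀ y, F (Finv F y) = y := fun y => Function.invFun_eq (hFsurj y)
  have hFl : ∀ x, Finv F (F x) = x := fun x => Function.leftInverse_invFun hFinj x
  have hFinv0 : Finv F 0 = 0 := by
    have := hFl 0; rwa [hF0] at this
  have hFinvAnti : Antitone (Finv F) := by
    intro a b hab
    by_contra h
    push_neg at h
    have h2 := hFanti h
    rw [hFr, hFr] at h2
    exact absurd hab (not_le.mpr h2)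
  have hFinvCont : Continuous (Finv F) := by
    have hmono : Monotone (fun y => -(Finv F y)) := fun a b hab => neg_le_neg (hFinvAnti hab)
    have hsurj : Function.Surjective (fun y => -(Finv F y)) := by
      intro x
      exact ⟨F (-x), by show -Finv F (F (-x)) = x; rw [hFl]; ring⟩
    have := hmono.continuous_of_surjective hsurj
    exact this.neg.congr (fun y => neg_neg _)
  have hFinvDeriv : ∀ y, HasDerivAt (Finv F) ((deriv F (Finv F y))⁻¹) y := fun y =>
    HasDerivAt.of_local_left_inverse hFinvCont.continuousAt
      ((hFdiff (Finv F y)).hasDerivAt) (hF' _).ne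
      (Eventually.of_forall hFr)
  have hrho : ∀ y, HasDerivAt (fun y => -(Finv F y)) (-(deriv F (Finv F y))⁻¹) y :=
    fun y => (hFinvDeriv y).neg
  have hrho_le : ∀ y, -(deriv F (Finv F y))⁻¹ ≤ G y := by
    intro y
    have h1 : deriv (fun y => -(Finv F y)) y = -(deriv F (Finv F y))⁻¹ := (hrho y).deriv
    calc -(deriv F (Finv F y))⁻¹ = deriv (fun y => -(Finv F y)) y := h1.symm
      _ ≤ G y := le_trans (le_max_left _ _) (hGmax y)
  -- the comparison function W
  set W : ℝ → ℝ := fun y => -(Finv F y) - ∫ s in (0:ℝ)..y, G s with hWdef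
  have hWderiv : ∀ y, HasDerivAt W (-(deriv F (Finv F y))⁻¹ - G y) y :=
    fun y => (hrho y).sub (hGc.integral_hasStrictDerivAt 0 y).hasDerivAt
  have hWanti : Antitone W :=
    antitone_of_deriv_nonpos (fun y => (hWderiv y).differentiableAt)
      (fun y => by rw [(hWderiv y).deriv]; linarith [hrho_le y])
  have hW0 : W 0 = 0 := by simp [hWdef, hFinv0]
  -- key inequality, positive side
  have keyC1 : ∀ u : ℝ, 0 < u → u ≤ -F u * G (-2 * F u) := by
    intro u hu
    have hFu : F u < 0 := by rw [← hF0]; exact hFanti hu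
    have h1 : W 0 ≤ W (F u) := hWanti hFu.le
    have hWFu : W (F u) = -u - ∫ s in (0:ℝ)..(F u), G s := by
      simp only [hWdef, hFl u]
    have hsymm : (∫ s in (0:ℝ)..(F u), G s) = -∫ s in (F u)..(0:ℝ), G s :=
      intervalIntegral.integral_symm _ _
    have h2 : u ≤ ∫ s in (F u)..(0:ℝ), G s := by
      rw [hW0] at h1; rw [hWFu, hsymm] at h1; linarith
    have h3 : (∫ s in (F u)..(0:ℝ), G s) ≤ ∫ _s in (F u)..(0:ℝ), G (F u) := by
      apply intervalIntegral.integral_mono_on hFu.le (hGc.intervalIntegrable _ _)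
        intervalIntegrable_const
      intro s hs
      exact hGanti (mem_Iic.mpr hFu.le) (mem_Iic.mpr hs.2) hs.1
    have h4 : (∫ _s in (F u)..(0:ℝ), G (F u)) = -F u * G (F u) := by
      rw [intervalIntegral.integral_const, smul_eq_mul]; ring
    have h5 : G (F u) = G (-F u) := by
      have := hGeven (-F u); rw [neg_neg] at this; exact this
    have h6 : G (-F u) ≤ G (-2 * F u) :=
      hGmono (mem_Ici.mpr (by linarith)) (mem_Ici.mpr (by linarith)) (by linarith)
    have h7 : -F u * G (-F u) ≤ -F u * G (-2 * F u) :=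
      mul_le_mul_of_nonneg_left h6 (by linarith)
    calc u ≤ ∫ s in (F u)..(0:ℝ), G s := h2
      _ ≤ -F u * G (F u) := h4 ▸ h3
      _ = -F u * G (-F u) := by rw [h5]
      _ ≤ -F u * G (-2 * F u) := h7
  -- key inequality, negative side
  have keyC2 : ∀ u : ℝ, u < 0 → -u ≤ F u * G (-2 * F u) := by
    intro u hu
    have hFu : 0 < F u := by rw [← hF0]; exact hFanti hu
    have h1 : W (F u) ≤ W 0 := hWanti hFu.le
    have hWFu : W (F u) = -u - ∫ s in (0:ℝ)..(F u), G s := by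
      simp only [hWdef, hFl u]
    have h2 : -u ≤ ∫ s in (0:ℝ)..(F u), G s := by
      rw [hW0] at h1; rw [hWFu] at h1; linarith
    have h3 : (∫ s in (0:ℝ)..(F u), G s) ≤ ∫ _s in (0:ℝ)..(F u), G (F u) := by
      apply intervalIntegral.integral_mono_on hFu.le (hGc.intervalIntegrable _ _)
        intervalIntegrable_const
      intro s hs
      exact hGmono (mem_Ici.mpr hs.1) (mem_Ici.mpr (hs.1.trans hs.2)) hs.2
    have h4 : (∫ _s in (0:ℝ)..(F u), G (F u)) = F u * G (F u) := by
      rw [intervalIntegral.integral_const, smul_eq_mul]; ring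
    have h5 : G (-2 * F u) = G (2 * F u) := by
      have := hGeven (2 * F u)
      rw [show -(2 * F u) = -2 * F u by ring] at this
      exact this
    have h6 : G (F u) ≤ G (2 * F u) :=
      hGmono (mem_Ici.mpr (by linarith)) (mem_Ici.mpr (by linarith)) (by linarith)
    have h7 : F u * G (F u) ≤ F u * G (2 * F u) :=
      mul_le_mul_of_nonneg_left h6 (by linarith)
    calc -u ≤ ∫ s in (0:ℝ)..(F u), G s := h2
      _ ≤ F u * G (F u) := h4 ▸ h3
      _ ≤ F u * G (2 * F u) := h7
      _ = F u * G (-2 * F u) := by rw [h5]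
  -- E is strictly increasing
  have hEd : Differentiable ℝ E := hE.differentiable one_ne_zero
  have hfd : Differentiable ℝ f := hf.differentiable one_ne_zero
  have hgd : Differentiable ℝ g := hg.differentiable one_ne_zero
  have hEpos' : ∀ t, 0 < deriv E t := by
    intro t; rw [hE' t]; exact one_div_pos.mpr (hGpos _)
  have hEmono : StrictMono E := strictMono_of_deriv_pos hEpos'
  -- f t ≥ E t ^ 2 / 2
  set K : ℝ → ℝ := fun t => f t - E t ^ 2 / 2 with hKdef
  have hKderiv : ∀ t, HasDerivAt K (-F (E t) - E t * deriv E t) t := by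
    intro t
    have h1 : HasDerivAt f (deriv f t) t := (hfd t).hasDerivAt
    have h2 : HasDerivAt E (deriv E t) t := (hEd t).hasDerivAt
    have h3 : HasDerivAt (fun t => E t ^ 2 / 2)
        ((2 : ℕ) * E t ^ 1 * deriv E t / 2) t := (h2.pow 2).div_const 2
    have h4 := h1.sub h3
    have h5 : deriv f t - (2 : ℕ) * E t ^ 1 * deriv E t / 2
        = -F (E t) - E t * deriv E t := by
      rw [hf' t]; push_cast; ring
    rw [h5] at h4
    exact h4
  have hKcont : Continuous K := by
    apply Continuous.sub hfd.continuous
    exact ((hEd.continuous.pow 2).div_const 2)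
  have hKmono : MonotoneOn K (Ici 0) := by
    apply monotoneOn_of_deriv_nonneg (convex_Ici 0) hKcont.continuousOn
      (fun t _ => ((hKderiv t).differentiableAt).differentiableWithinAt)
    intro t ht
    rw [interior_Ici] at ht
    rw [(hKderiv t).deriv, hE' t]
    have hEt : 0 < E t := by
      have := hEmono ht; rwa [hE0] at this
    have hdiv : E t * (1 / G (-2 * F (E t))) ≤ -F (E t) := by
      rw [mul_one_div, div_le_iff₀ (hGpos _)]
      exact keyC1 (E t) hEt
    linarith
  have hKanti : AntitoneOn K (Iic 0) := by
    apply antitoneOn_of_deriv_nonpos (convex_Iic 0) hKcont.continuousOn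
      (fun t _ => ((hKderiv t).differentiableAt).differentiableWithinAt)
    intro t ht
    rw [interior_Iic] at ht
    rw [(hKderiv t).deriv, hE' t]
    have hEt : E t < 0 := by
      have := hEmono ht; rwa [hE0] at this
    have hdiv : -E t * (1 / G (-2 * F (E t))) ≤ F (E t) := by
      rw [mul_one_div, div_le_iff₀ (hGpos _)]
      exact keyC2 (E t) hEt
    have : -(E t * (1 / G (-2 * F (E t)))) ≤ F (E t) := by
      rw [neg_mul] at hdiv; exact hdiv
    linarith
  have hK0 : K 0 = 0 := by simp [hKdef, hf0, hE0]
  have hfE : ∀ t : ℝ, E t ^ 2 / 2 ≤ f t := by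
    intro t
    rcases le_total 0 t with h | h
    · have := hKmono (self_mem_Ici) (mem_Ici.mpr h) h
      rw [hK0] at this
      simp only [hKdef] at this
      linarith
    · have := hKanti (mem_Iic.mpr h) (self_mem_Iic) h
      rw [hK0] at this
      simp only [hKdef] at this
      linarith
  -- g x ≥ x ^ 2
  set L : ℝ → ℝ := fun x => g x - x ^ 2 with hLdef
  have hLderiv : ∀ x, HasDerivAt L (deriv g x - 2 * x) x := by
    intro x
    have h1 : HasDerivAt g (deriv g x) x := (hgd x).hasDerivAt
    have h2 : HasDerivAt (fun x : ℝ => x ^ 2) (2 * x) x := by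
      simpa using hasDerivAt_pow 2 x
    exact h1.sub h2
  have hLcont : Continuous L := hgd.continuous.sub (continuous_pow 2)
  have hLmono : MonotoneOn L (Ici 0) := by
    apply monotoneOn_of_deriv_nonneg (convex_Ici 0) hLcont.continuousOn
      (fun x _ => ((hLderiv x).differentiableAt).differentiableWithinAt)
    intro x hx
    rw [interior_Ici] at hx
    rw [(hLderiv x).deriv]
    have h1 : ((2 * x : ℝ) : EReal) ≤ ((deriv g x : ℝ) : EReal) :=
      le_trans (le_max_left _ _) (hg1 x (le_of_lt hx))
    have h2 : (2 * x : ℝ) ≤ deriv g x := EReal.coe_le_coe_iff.mp h1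
    linarith
  have hLanti : AntitoneOn L (Iic 0) := by
    apply antitoneOn_of_deriv_nonpos (convex_Iic 0) hLcont.continuousOn
      (fun x _ => ((hLderiv x).differentiableAt).differentiableWithinAt)
    intro x hx
    rw [interior_Iic] at hx
    rw [(hLderiv x).deriv]
    have h1 : ((deriv g x : ℝ) : EReal) ≤ ((2 * x : ℝ) : EReal) :=
      le_trans (hg2 x (le_of_lt hx)) (min_le_left _ _)
    have h2 : deriv g x ≤ (2 * x : ℝ) := EReal.coe_le_coe_iff.mp h1
    linarith
  have hL0 : L 0 = 0 := by simp [hLdef, hg0]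
  have hgx : ∀ x : ℝ, x ^ 2 ≤ g x := by
    intro x
    rcases le_total 0 x with h | h
    · have := hLmono (self_mem_Ici) (mem_Ici.mpr h) h
      rw [hL0] at this
      simp only [hLdef] at this
      linarith
    · have := hLanti (mem_Iic.mpr h) (self_mem_Iic) h
      rw [hL0] at this
      simp only [hLdef] at this
      linarith
  refine ⟨by simp [hf0, hg0], ?_⟩
  intro t x hne
  by_cases ht : t = 0
  · subst ht
    have hx : x ≠ 0 := by simpa using hne
    have h1 : 0 < x ^ 2 := lt_of_le_of_ne (sq_nonneg x) (Ne.symm (pow_ne_zero 2 hx))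
    have h2 := hgx x
    rw [hf0, hE0]
    nlinarith
  · have hEt : E t ≠ 0 := by
      intro h
      exact ht (hEmono.injective (by rw [h, hE0]))
    have h1 : 0 < E t ^ 2 := lt_of_le_of_ne (sq_nonneg _) (Ne.symm (pow_ne_zero 2 hEt))
    have h2 := hgx x
    have h3 := hfE t
    nlinarith [sq_nonneg (x + E t / 2)]
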